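/- Let θ₁,...,θ_n be i.i.d. uniform random points on S^d. Then with probability at least 1 - δ, the separation distance satisfies min_{i≠j} ρ(θ_i, θ_j) ≲ (log(1/δ)/n²)^{1/d}, with implied constant depending only on d. In particular, i.i.d. uniform random points fail to be quasi-uniform with high probability: the separation distance is of order n^{-2/d} rather than n^{-1/d}. -/

import Mathlib

open MeasureTheory ProbabilityTheory
open scoped RealInnerProductSpace ENNReal Pointwise

set_option maxHeartbeats 1000000

/-- geodesic distance on the unit sphere of `ℝ^{d+1}` -/
noncomputable def geoDist {d : ℕ} (x y : EuclideanSpace ℝ (Fin (d + 1))) : ℝ :=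
  Real.arccos ⟪x, y⟫

/-- the uniform (normalized surface-area) probability distribution on `S^d` -/
noncomputable def unifSphere (d : ℕ) :
    Measure (Metric.sphere (0 : EuclideanSpace ℝ (Fin (d + 1))) 1) :=
  ((volume : Measure (EuclideanSpace ℝ (Fin (d + 1)))).toSphere Set.univ)⁻¹ •
    (volume : Measure (EuclideanSpace ℝ (Fin (d + 1)))).toSphere

section Birthday
open Finset


/-- sum over injective tuples of products of probabilities -/
noncomputable def injSum (M n : ℕ) (q : Fin M → ℝ) : ℝ :=
  ∑ x : Fin n → Fin M, if Function.Injective x then ∏ j, q (x j) else 0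

lemma injSum_succ (M n : ℕ) (q : Fin M → ℝ) (hq0 : ∀ u, 0 ≤ q u)
    (p₀ : ℝ) (hp : ∀ u, p₀ ≤ q u) (hsum : ∑ u, q u = 1) :
    injSum M (n + 1) q ≤ max (1 - n * p₀) 0 * injSum M n q := by
  have key : injSum M (n+1) q
      = ∑ g : Fin n → Fin M, ∑ a : Fin M,
        (if Function.Injective (Fin.cons a g) then q a * ∏ j, q (g j) else 0) := by
    rw [injSum, ← Equiv.sum_comp (Fin.consEquiv (fun _ => Fin M))]
    rw [Fintype.sum_prod_type, Finset.sum_comm]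
    refine Finset.sum_congr rfl fun g _ => Finset.sum_congr rfl fun a _ => ?_
    simp only [Fin.consEquiv_apply, Fin.prod_univ_succ, Fin.cons_zero, Fin.cons_succ]
    rfl
  rw [key]
  have step : ∀ g : Fin n → Fin M,
      (∑ a : Fin M, if Function.Injective (Fin.cons a g) then q a * ∏ j, q (g j) else 0)
      ≤ max (1 - n * p₀) 0 * (if Function.Injective g then ∏ j, q (g j) else 0) := by
    intro g
    by_cases hg : Function.Injective g
    · have : ∀ a : Fin M, (if Function.Injective (Fin.cons a g) then q a * ∏ j, q (g j) else 0)
          = (if a ∈ Finset.univ \ (Finset.univ.image g) then q a else 0) * ∏ j, q (g j) := by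
        intro a
        simp only [Fin.cons_injective_iff]
        by_cases ha : a ∈ Finset.univ \ (Finset.univ.image g)
        · have hnr : a ∉ Set.range g := by
            rintro ⟨i, rfl⟩
            exact (Finset.mem_sdiff.mp ha).2 (Finset.mem_image_of_mem g (Finset.mem_univ i))
          simp [ha, hnr, hg]
        · have hr : a ∈ Set.range g := by
            have hmem : a ∈ Finset.univ.image g := by
              by_contra h
              exact ha (Finset.mem_sdiff.mpr ⟨Finset.mem_univ a, h⟩)
            obtain ⟨i, _, rfl⟩ := Finset.mem_image.mp hmem
            exact ⟨i, rfl⟩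
          simp [ha, hr]
      rw [Finset.sum_congr rfl (fun a _ => this a), ← Finset.sum_mul, Finset.sum_ite_mem,
        Finset.univ_inter]
      have hcard : (Finset.univ.image g).card = n := by
        rw [Finset.card_image_of_injective _ hg, Finset.card_univ, Fintype.card_fin]
      have hsub : ∑ a ∈ Finset.univ \ Finset.univ.image g, q a
          = 1 - ∑ a ∈ Finset.univ.image g, q a := by
        rw [eq_sub_iff_add_eq, Finset.sum_sdiff_eq_sub (Finset.subset_univ _), hsum]; ring
      have hge : (n : ℝ) * p₀ ≤ ∑ a ∈ Finset.univ.image g, q a := by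
        have := Finset.card_nsmul_le_sum (Finset.univ.image g) q p₀ (fun x _ => hp x)
        rwa [hcard, nsmul_eq_mul] at this
      have h1 : ∑ a ∈ Finset.univ \ Finset.univ.image g, q a ≤ max (1 - n * p₀) 0 := by
        rw [hsub]; exact le_max_of_le_left (by linarith)
      have h0 : (0:ℝ) ≤ ∏ j, q (g j) := Finset.prod_nonneg fun j _ => hq0 _
      simp only [hg, if_true]
      exact mul_le_mul_of_nonneg_right h1 h0 |>.trans_eq rfl
    · have : ∀ a : Fin M, (if Function.Injective (Fin.cons a g) then q a * ∏ j, q (g j) else 0) = 0 := by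
        intro a
        simp [Fin.cons_injective_iff, hg]
      simp [this, hg]
  calc ∑ g : Fin n → Fin M, ∑ a : Fin M,
        (if Function.Injective (Fin.cons a g) then q a * ∏ j, q (g j) else 0)
      ≤ ∑ g : Fin n → Fin M, max (1 - n * p₀) 0 * (if Function.Injective g then ∏ j, q (g j) else 0) :=
        Finset.sum_le_sum fun g _ => step g
    _ = max (1 - n * p₀) 0 * injSum M n q := by rw [← Finset.mul_sum]; rfl

lemma injSum_le (M n : ℕ) (q : Fin M → ℝ) (hq0 : ∀ u, 0 ≤ q u)
    (p₀ : ℝ) (hp0 : 0 ≤ p₀) (hp : ∀ u, p₀ ≤ q u) (hsum : ∑ u, q u = 1) :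
    injSum M n q ≤ Real.exp (-p₀ * (n * (n-1) / 2)) := by
  have main : ∀ n : ℕ, injSum M n q ≤ ∏ k ∈ Finset.range n, max (1 - k * p₀) 0 := by
    intro n
    induction n with
    | zero => simp [injSum, Function.injective_of_subsingleton]
    | succ n ih =>
      rw [Finset.prod_range_succ]
      calc injSum M (n+1) q ≤ max (1 - n * p₀) 0 * injSum M n q :=
            injSum_succ M n q hq0 p₀ hp hsum
        _ ≤ max (1 - n * p₀) 0 * ∏ k ∈ Finset.range n, max (1 - k * p₀) 0 :=
            mul_le_mul_of_nonneg_left ih (le_max_right _ _)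
        _ = _ := mul_comm _ _
  calc injSum M n q ≤ ∏ k ∈ Finset.range n, max (1 - k * p₀) 0 := main n
    _ ≤ ∏ k ∈ Finset.range n, Real.exp (-(k * p₀)) := by
        refine Finset.prod_le_prod (fun k _ => le_max_right _ 0) fun k _ => ?_
        refine max_le ?_ (Real.exp_pos _).le
        have := Real.add_one_le_exp (-(k * p₀))
        linarith
    _ = Real.exp (-p₀ * (n * (n-1) / 2)) := by
        rw [← Real.exp_sum]
        congr 1
        have : ∑ k ∈ Finset.range n, -((k:ℝ) * p₀) = -p₀ * ∑ k ∈ Finset.range n, (k:ℝ) := by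
          rw [Finset.mul_sum]; exact Finset.sum_congr rfl fun k _ => by ring
        have gauss : ∀ m : ℕ, (∑ k ∈ Finset.range m, (k:ℝ)) = m * (m - 1) / 2 := by
          intro m
          induction m with
          | zero => simp
          | succ m ih => rw [Finset.sum_range_succ, ih]; push_cast; ring
        rw [this, gauss]

end Birthday

section Geo

lemma geoDist_le {d : ℕ} (x y : EuclideanSpace ℝ (Fin (d + 1)))
    (hx : ‖x‖ = 1) (hy : ‖y‖ = 1) : geoDist x y ≤ Real.pi / 2 * ‖x - y‖ := by
  set s : ℝ := ⟪x, y⟫ with hs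
  have hs1 : s ≤ 1 := by
    have := real_inner_le_norm x y
    rwa [hx, hy, mul_one] at this
  have hs2 : -1 ≤ s := by
    have := abs_real_inner_le_norm x y
    rw [hx, hy, mul_one] at this
    linarith [neg_abs_le s]
  set θ : ℝ := Real.arccos s with hθ
  have hθ0 : 0 ≤ θ := Real.arccos_nonneg s
  have hθπ : θ ≤ Real.pi := Real.arccos_le_pi s
  have hcos : Real.cos θ = s := Real.cos_arccos hs2 hs1
  have hnorm : ‖x - y‖ ^ 2 = 2 - 2 * s := by
    rw [norm_sub_sq_real, hx, hy]; ring
  have hb : Real.cos θ ≤ 1 - 2 / Real.pi ^ 2 * θ ^ 2 :=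
    Real.cos_le_one_sub_mul_cos_sq (by rw [abs_of_nonneg hθ0]; exact hθπ)
  have hπ : (0:ℝ) < Real.pi := Real.pi_pos
  have hsq : θ ^ 2 ≤ (Real.pi / 2 * ‖x - y‖) ^ 2 := by
    have h1 : 2 / Real.pi ^ 2 * θ ^ 2 ≤ 1 - s := by rw [← hcos]; linarith
    have : θ ^ 2 ≤ Real.pi ^ 2 / 2 * (1 - s) := by
      have h2 : (0:ℝ) < Real.pi ^ 2 := by positivity
      rw [div_mul_eq_mul_div, div_le_iff₀ h2] at h1
      nlinarith
    calc θ ^ 2 ≤ Real.pi ^ 2 / 2 * (1 - s) := this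
      _ = Real.pi ^ 2 / 4 * (2 - 2*s) := by ring
      _ = (Real.pi / 2) ^ 2 * ‖x - y‖ ^ 2 := by rw [hnorm]; ring
      _ = _ := by ring
  have h2 : (0:ℝ) ≤ Real.pi / 2 * ‖x - y‖ := by positivity
  calc geoDist x y = θ := rfl
    _ = Real.sqrt (θ ^ 2) := (Real.sqrt_sq hθ0).symm
    _ ≤ Real.sqrt ((Real.pi / 2 * ‖x - y‖) ^ 2) := Real.sqrt_le_sqrt hsq
    _ = Real.pi / 2 * ‖x - y‖ := Real.sqrt_sq h2

end Geo

section CapPart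
open MeasureTheory Metric

lemma volume_ball_pos' (d : ℕ) : (0:ℝ≥0∞) < volume (ball (0:EuclideanSpace ℝ (Fin (d+1))) 1) :=
  measure_ball_pos _ _ one_pos

lemma volume_ball_lt_top' (d : ℕ) : volume (ball (0:EuclideanSpace ℝ (Fin (d+1))) 1) < ⊤ :=
  measure_ball_lt_top

lemma aux_m_bounds (a t' m ρ : ℝ) (ha1 : 1/2 ≤ a) (ha2 : a ≤ 3/4) (ht'0 : 0 ≤ t')
    (ht' : t' ≤ ρ^2/25) (hρsq : ρ^2 ≤ 1/4) (hm0 : 0 ≤ m) (hm2 : m^2 = a^2 + t') :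
    1/2 ≤ m ∧ m ≤ 9/10 ∧ a ≤ m := by
  refine ⟨by nlinarith, by nlinarith, by nlinarith⟩

lemma aux_dist_bound (a t' m ρ : ℝ) (ha1 : 1/2 ≤ a) (ha2 : a ≤ 3/4) (ht'0 : 0 ≤ t')
    (ht' : t' ≤ ρ^2/25) (hρ0 : 0 < ρ) (hρsq : ρ^2 ≤ 1/4) (hm_lb : 1/2 ≤ m)
    (hma : a ≤ m) (hm2 : m^2 = a^2 + t') :
    (m⁻¹*a - 1)^2 + m⁻¹^2 * t' ≤ ρ^2 := by
  have hmpos : 0 < m := by linarith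
  have hmne : m ≠ 0 := ne_of_gt hmpos
  have hminv : m⁻¹ ≤ 2 := by
    rw [inv_eq_one_div, div_le_iff₀ hmpos]; linarith
  have hminv0 : 0 < m⁻¹ := inv_pos.mpr hmpos
  have hmma : m - a ≤ t' := by nlinarith
  have hfirst : (m⁻¹*a - 1)^2 = m⁻¹^2 * (m - a)^2 := by
    have h : m⁻¹*a - 1 = m⁻¹ * (a - m) := by
      rw [mul_sub, inv_mul_cancel₀ hmne]
    rw [h]; ring
  rw [hfirst]
  have h1 : (m - a)^2 ≤ t'^2 := by nlinarith
  have h2 : m⁻¹^2 ≤ 4 := by nlinarith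
  nlinarith [sq_nonneg (m - a)]

/-- lower bound for the normalized measure of a spherical cap -/
lemma cap_lower (d : ℕ) (hd : 1 ≤ d) :
    ∃ κ : ℝ, 0 < κ ∧ ∀ (c : Metric.sphere (0 : EuclideanSpace ℝ (Fin (d+1))) 1) (ρ : ℝ),
      0 < ρ → ρ ≤ 1/2 →
      ENNReal.ofReal (κ * ρ ^ d) ≤ unifSphere d (Metric.closedBall c ρ) := by
  have hdpos : (0:ℝ) < d := by exact_mod_cast hd
  have hsd : (0:ℝ) < Real.sqrt d := Real.sqrt_pos.mpr hdpos
  obtain ⟨Vr, hVr⟩ : ∃ v : ℝ, (volume (ball (0:EuclideanSpace ℝ (Fin (d+1))) 1)).toReal = v := ⟨_, rfl⟩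
  have hVrpos : 0 < Vr := hVr ▸ ENNReal.toReal_pos (volume_ball_pos' d).ne' (volume_ball_lt_top' d).ne
  have hnum : (0:ℝ) < (1/4) * (2/(5*Real.sqrt d))^d := by positivity
  refine ⟨(1/4) * (2/(5*Real.sqrt d))^d / Vr, div_pos hnum hVrpos, ?_⟩
  intro c ρ hρ0 hρ12
  set κ : ℝ := (1/4) * (2/(5*Real.sqrt d))^d / Vr with hκ
  set s : ℝ := ρ / (5 * Real.sqrt d) with hsdef
  have hs0 : 0 < s := by positivity
  -- the box
  set B : Set (EuclideanSpace ℝ (Fin (d+1))) :=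
    {x | x 0 ∈ Set.Icc (1/2:ℝ) (3/4) ∧ ∀ i : Fin d, x i.succ ∈ Set.Icc (-s) s} with hB
  -- volume of the box
  set I : Fin (d+1) → Set ℝ := Fin.cons (Set.Icc (1/2:ℝ) (3/4)) (fun _ => Set.Icc (-s) s) with hI
  have hBpre : B = (MeasurableEquiv.toLp 2 (Fin (d+1) → ℝ)).symm ⁻¹' (Set.univ.pi I) := by
    ext x
    simp only [Set.mem_preimage, Set.mem_pi, Set.mem_univ, forall_true_left, hB, Set.mem_setOf_eq]
    constructor
    · rintro ⟨h0, hs⟩ i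
      refine Fin.cases ?_ ?_ i
      · exact h0
      · exact hs
    · intro h
      exact ⟨h 0, fun i => h i.succ⟩
  have hImeas : MeasurableSet (Set.univ.pi I) := by
    refine MeasurableSet.univ_pi fun i => ?_
    refine Fin.cases ?_ (fun j => ?_) i
    · simp only [hI, Fin.cons_zero]; exact measurableSet_Icc
    · simp only [hI, Fin.cons_succ]; exact measurableSet_Icc
  have hBmeas : MeasurableSet B := by
    rw [hBpre]; exact (MeasurableEquiv.toLp 2 (Fin (d+1) → ℝ)).symm.measurable hImeas
  have hvolB : volume B = ENNReal.ofReal ((1/4) * (2*s)^d) := by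
    rw [hBpre, (EuclideanSpace.volume_preserving_symm_measurableEquiv_toLp (Fin (d+1))).measure_preimage
      hImeas.nullMeasurableSet, volume_pi_pi]
    rw [Fin.prod_univ_succ]
    simp only [hI, Fin.cons_zero, Fin.cons_succ, Real.volume_Icc, Finset.prod_const,
      Finset.card_univ, Fintype.card_fin]
    rw [← ENNReal.ofReal_pow (by linarith), ← ENNReal.ofReal_mul (by norm_num)]
    congr 1
    ring
  -- reflection sending `e₀` to `c`
  set e₀ : EuclideanSpace ℝ (Fin (d+1)) := EuclideanSpace.single 0 1 with he₀
  have hce : ‖(c : EuclideanSpace ℝ (Fin (d+1)))‖ = 1 := by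
    have hc2 := c.2
    rwa [mem_sphere_zero_iff_norm] at hc2
  have he₀n : ‖e₀‖ = 1 := by simp [he₀]
  set R := Submodule.reflection (Submodule.span ℝ {(c : EuclideanSpace ℝ (Fin (d+1))) - e₀})ᗮ with hRdef
  have hRc : R c = e₀ := Submodule.reflection_sub (by rw [hce, he₀n])
  have hRe : R e₀ = c := by rw [← hRc, Submodule.reflection_reflection]
  -- the subset claim
  have hsubset : (⇑R '' B) ⊆
      Set.Ioo (0:ℝ) 1 • ((Subtype.val) '' (Metric.closedBall c ρ)) := by
    rintro _ ⟨x, hxB, rfl⟩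
    obtain ⟨hx0, hxs⟩ := hxB
    obtain ⟨a, ha_def⟩ : ∃ a : ℝ, x 0 = a := ⟨_, rfl⟩
    obtain ⟨haI1, haI2⟩ : (1/2:ℝ) ≤ a ∧ a ≤ 3/4 := by
      rw [← ha_def]; exact ⟨hx0.1, hx0.2⟩
    obtain ⟨t', ht'_def⟩ : ∃ t' : ℝ, (∑ i : Fin d, (x i.succ)^2) = t' := ⟨_, rfl⟩
    have ht'0 : 0 ≤ t' := ht'_def ▸ Finset.sum_nonneg fun i _ => sq_nonneg _
    have hs2 : s^2 = ρ^2 / (25 * d) := by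
      rw [hsdef, div_pow, mul_pow, Real.sq_sqrt hdpos.le]
      norm_num
    have ht' : t' ≤ ρ^2/25 := by
      have h1 : (∑ i : Fin d, (x i.succ)^2) ≤ ∑ _i : Fin d, s^2 :=
        Finset.sum_le_sum fun i _ => sq_le_sq' (hxs i).1 (hxs i).2
      have h2 : (∑ _i : Fin d, s^2) = d * s^2 := by
        rw [Finset.sum_const, Finset.card_univ, Fintype.card_fin, nsmul_eq_mul]
      rw [ht'_def, h2, hs2] at h1
      calc t' ≤ d * (ρ^2/(25*d)) := h1
        _ = ρ^2/25 := by field_simp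
    have hρsq : ρ^2 ≤ 1/4 := by nlinarith
    obtain ⟨m, hm_def⟩ : ∃ m : ℝ, ‖x‖ = m := ⟨_, rfl⟩
    have hm0 : 0 ≤ m := hm_def ▸ norm_nonneg _
    have hm2 : m^2 = a^2 + t' := by
      rw [← hm_def, ← ha_def, ← ht'_def, EuclideanSpace.norm_eq,
        Real.sq_sqrt (Finset.sum_nonneg fun i _ => by positivity)]
      simp only [Real.norm_eq_abs, sq_abs]
      rw [Fin.sum_univ_succ]
    obtain ⟨hm_lb, hm_ub, hma⟩ := aux_m_bounds a t' m ρ haI1 haI2 ht'0 ht' hρsq hm0 hm2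
    have hmpos : 0 < m := by linarith
    have hmne : m ≠ 0 := ne_of_gt hmpos
    have hw1 : ‖m⁻¹ • x‖ = 1 := by
      rw [norm_smul, Real.norm_eq_abs, abs_of_pos (inv_pos.mpr hmpos), hm_def,
        inv_mul_cancel₀ hmne]
    -- coordinatewise estimate of ‖m⁻¹ • x - e₀‖
    have hwe : ‖m⁻¹ • x - e₀‖ ≤ ρ := by
      have h0 : (m⁻¹ • x - e₀) 0 = m⁻¹ * a - 1 := by
        simp [he₀, EuclideanSpace.single_apply, ha_def]
      have hi : ∀ i : Fin d, (m⁻¹ • x - e₀) i.succ = m⁻¹ * x i.succ := by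
        intro i
        simp [he₀, EuclideanSpace.single_apply, Fin.succ_ne_zero i]
      have hcoord : ‖m⁻¹ • x - e₀‖^2 = (m⁻¹*a - 1)^2 + m⁻¹^2 * t' := by
        rw [EuclideanSpace.norm_eq, Real.sq_sqrt (Finset.sum_nonneg fun i _ => by positivity)]
        simp only [Real.norm_eq_abs, sq_abs]
        rw [Fin.sum_univ_succ, h0]
        congr 1
        rw [← ht'_def, Finset.mul_sum]
        refine Finset.sum_congr rfl fun i _ => ?_
        rw [hi i]; ring
      have hsq : ‖m⁻¹ • x - e₀‖^2 ≤ ρ^2 :=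
        hcoord ▸ aux_dist_bound a t' m ρ haI1 haI2 ht'0 ht' hρ0 hρsq hm_lb hma hm2
      nlinarith [norm_nonneg (m⁻¹ • x - e₀)]
    refine Set.mem_smul.mpr ⟨m, Set.mem_Ioo.mpr ⟨hmpos, by linarith⟩, R (m⁻¹ • x), ?_, ?_⟩
    · refine ⟨⟨R (m⁻¹ • x), ?_⟩, ?_, rfl⟩
      · rw [mem_sphere_zero_iff_norm, R.norm_map]
        exact hw1
      · rw [Metric.mem_closedBall, Subtype.dist_eq]
        show dist (R (m⁻¹ • x)) (c : EuclideanSpace ℝ (Fin (d+1))) ≤ ρ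
        rw [dist_eq_norm, ← hRe, ← map_sub, R.norm_map]
        exact hwe
    · calc m • R (m⁻¹ • x) = R (m • m⁻¹ • x) := (R.map_smul m (m⁻¹ • x)).symm
        _ = R x := by rw [smul_smul, mul_inv_cancel₀ hmne, one_smul]
  -- putting the measure estimates together
  have hcapmeas : MeasurableSet (Metric.closedBall c ρ) := measurableSet_closedBall
  have hRB : (⇑R '' B) = ⇑R.symm ⁻¹' B := by
    have h := Set.image_eq_preimage_of_inverse (f := ⇑R) (g := ⇑R.symm)
      (fun z => R.symm_apply_apply z) (fun z => R.apply_symm_apply z)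
    exact congrFun h B
  have hRvol : volume (⇑R '' B) = volume B := by
    rw [hRB, R.symm.measurePreserving.measure_preimage hBmeas.nullMeasurableSet]
  have hmono : ENNReal.ofReal ((1/4) * (2*s)^d)
      ≤ volume (Set.Ioo (0:ℝ) 1 • ((Subtype.val) '' (Metric.closedBall c ρ))) := by
    rw [← hvolB, ← hRvol]
    exact measure_mono hsubset
  have hdim : (Module.finrank ℝ (EuclideanSpace ℝ (Fin (d+1)))) = d + 1 :=
    finrank_euclideanSpace_fin
  have hT : (volume : Measure (EuclideanSpace ℝ (Fin (d+1)))).toSphere (Metric.closedBall c ρ)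
      = (d+1 : ℕ) * volume (Set.Ioo (0:ℝ) 1 • ((Subtype.val) '' (Metric.closedBall c ρ))) := by
    rw [Measure.toSphere_apply' _ hcapmeas, hdim]
  have hTuniv : (volume : Measure (EuclideanSpace ℝ (Fin (d+1)))).toSphere Set.univ
      = (d+1 : ℕ) * volume (ball (0:EuclideanSpace ℝ (Fin (d+1))) 1) := by
    rw [Measure.toSphere_apply_univ, hdim]
  have hV : volume (ball (0:EuclideanSpace ℝ (Fin (d+1))) 1) = ENNReal.ofReal Vr := by
    rw [← hVr, ENNReal.ofReal_toReal (volume_ball_lt_top' d).ne]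
  have hkey : (1/4) * (2*s)^d = Vr * (κ * ρ^d) := by
    have h2s : 2*s = (2/(5*Real.sqrt d)) * ρ := by rw [hsdef]; ring
    rw [h2s, mul_pow, hκ]
    field_simp
  have hTuniv_ne0 : (volume : Measure (EuclideanSpace ℝ (Fin (d+1)))).toSphere Set.univ ≠ 0 := by
    rw [hTuniv]
    exact mul_ne_zero (by simp) (volume_ball_pos' d).ne'
  have hTuniv_ne_top : (volume : Measure (EuclideanSpace ℝ (Fin (d+1)))).toSphere Set.univ ≠ ⊤ := by
    rw [hTuniv]
    exact ENNReal.mul_ne_top (ENNReal.natCast_ne_top _) (volume_ball_lt_top' d).ne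
  have hchain : ((volume : Measure (EuclideanSpace ℝ (Fin (d+1)))).toSphere Set.univ)
        * ENNReal.ofReal (κ * ρ^d)
      ≤ (volume : Measure (EuclideanSpace ℝ (Fin (d+1)))).toSphere (Metric.closedBall c ρ) := by
    rw [hT, hTuniv, hV, mul_assoc, ← ENNReal.ofReal_mul hVrpos.le, ← hkey]
    exact mul_le_mul_right hmono _
  have : ENNReal.ofReal (κ * ρ^d)
      = ((volume : Measure (EuclideanSpace ℝ (Fin (d+1)))).toSphere Set.univ)⁻¹
        * (((volume : Measure (EuclideanSpace ℝ (Fin (d+1)))).toSphere Set.univ)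
          * ENNReal.ofReal (κ * ρ^d)) := by
    rw [← mul_assoc, ENNReal.inv_mul_cancel hTuniv_ne0 hTuniv_ne_top, one_mul]
  rw [unifSphere, Measure.smul_apply, smul_eq_mul, this]
  exact mul_le_mul_right hchain _


lemma exists_partition (d : ℕ) (κ : ℝ)
    (hκ : ∀ (c : Metric.sphere (0 : EuclideanSpace ℝ (Fin (d+1))) 1) (ρ : ℝ),
      0 < ρ → ρ ≤ 1/2 → ENNReal.ofReal (κ * ρ ^ d) ≤ unifSphere d (Metric.closedBall c ρ))
    (r : ℝ) (hr0 : 0 < r) (hr2 : r ≤ 2) :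
    ∃ (M : ℕ), 0 < M ∧ ∃ F : Metric.sphere (0 : EuclideanSpace ℝ (Fin (d+1))) 1 → Fin M,
      Measurable F ∧
      (∀ x x', F x = F x' → dist x x' ≤ 2*r) ∧
      (∀ u : Fin M, ENNReal.ofReal (κ * (r/4) ^ d) ≤ unifSphere d (F ⁻¹' {u})) := by
  classical
  set S := Metric.sphere (0 : EuclideanSpace ℝ (Fin (d+1))) 1 with hS
  -- a maximal (cardinality) r-separated finite set
  set P : Finset S → Prop := fun Y => ∀ y ∈ Y, ∀ z ∈ Y, y ≠ z → r < dist y z with hP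
  -- bound on cardinalities of separated sets
  obtain ⟨t, ht⟩ : ∃ t : Finset S, (Set.univ : Set S) ⊆ ⋃ z ∈ t, Metric.ball z (r/2) := by
    obtain ⟨t, ht⟩ := IsCompact.elim_finite_subcover (isCompact_univ (X := S))
      (fun z : S => Metric.ball z (r/2)) (fun z => isOpen_ball)
      (fun x _ => Set.mem_iUnion.mpr ⟨x, mem_ball_self (by linarith)⟩)
    exact ⟨t, ht⟩
  have hcover : ∀ x : S, ∃ z, z ∈ t ∧ x ∈ Metric.ball z (r/2) := by
    intro x
    have := ht (Set.mem_univ x)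
    simpa using this
  have hbound : ∀ Y : Finset S, P Y → Y.card ≤ t.card := by
    intro Y hY
    classical
    refine Finset.card_le_card_of_injOn (fun y => Classical.choose (hcover y)) ?_ ?_
    · intro y _
      exact (Classical.choose_spec (hcover y)).1
    · intro y hy y' hy' hfe
      by_contra hne
      have h1 := (Classical.choose_spec (hcover y)).2
      have h2 := (Classical.choose_spec (hcover y')).2
      have hfe' : Classical.choose (hcover y) = Classical.choose (hcover y') := hfe
      rw [hfe'] at h1
      have : dist y y' < r := by
        have := dist_triangle y (Classical.choose (hcover y')) y'
        rw [mem_ball] at h1 h2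
        rw [dist_comm] at h2
        calc dist y y' ≤ _ + _ := this
          _ < r/2 + r/2 := by exact add_lt_add h1 h2
          _ = r := by ring
      exact absurd this (not_lt.mpr (hY y hy y' hy' hne).le)
  -- take a separated set of maximal cardinality
  set C : Set ℕ := {k | ∃ Y : Finset S, P Y ∧ Y.card = k} with hC
  have hCne : C.Nonempty := ⟨0, ∅, by intro y hy; simp at hy, rfl⟩
  have hCbdd : BddAbove C := by
    refine ⟨t.card, ?_⟩
    rintro k ⟨Y, hY, rfl⟩
    exact hbound Y hY
  obtain ⟨Y, hYsep, hYcard⟩ : sSup C ∈ C := Nat.sSup_mem hCne hCbdd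
  have hdense : ∀ x : S, ∃ y ∈ Y, dist x y ≤ r := by
    intro x
    by_contra hcon
    push_neg at hcon
    have hxY : x ∉ Y := by
      intro hx
      have := hcon x hx
      simp at this
      linarith
    have hsep' : P (insert x Y) := by
      intro p hp q hq hne
      rcases Finset.mem_insert.mp hp with hpx | hpY
      · rcases Finset.mem_insert.mp hq with hqx | hqY
        · exact absurd (hpx.trans hqx.symm) hne
        · subst hpx; exact hcon q hqY
      · rcases Finset.mem_insert.mp hq with hqx | hqY
        · subst hqx; rw [dist_comm]; exact hcon p hpY
        · exact hYsep p hpY q hqY hne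
    have : (insert x Y).card ∈ C := ⟨_, hsep', rfl⟩
    have hle := le_csSup hCbdd this
    rw [Finset.card_insert_of_notMem hxY, hYcard] at hle
    omega
  -- Y is nonempty since the sphere is nonempty
  have hptS : ∃ x : S, True := by
    refine ⟨⟨EuclideanSpace.single 0 1, ?_⟩, trivial⟩
    simp [hS]
  obtain ⟨x₀, -⟩ := hptS
  have hYne : Y.Nonempty := by
    obtain ⟨y, hy, -⟩ := hdense x₀
    exact ⟨y, hy⟩
  set M := Y.card with hM
  have hMpos : 0 < M := Finset.card_pos.mpr hYne
  haveI : Nonempty (Fin M) := Fin.pos_iff_nonempty.mp hMpos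
  refine ⟨M, hMpos, ?_⟩
  set cE : Fin M → S := fun u => ((Y.equivFin.symm u : {x // x ∈ Y}) : S) with hcE
  have hsepE : ∀ u v : Fin M, u ≠ v → r < dist (cE u) (cE v) := by
    intro u v huv
    have hne : (Y.equivFin.symm u : {x // x ∈ Y}) ≠ Y.equivFin.symm v :=
      fun h => huv (Y.equivFin.symm.injective h)
    have hne2 : cE u ≠ cE v := fun h => hne (Subtype.ext h)
    exact hYsep _ (Y.equivFin.symm u).2 _ (Y.equivFin.symm v).2 hne2
  have hdenseE : ∀ x : S, ∃ u : Fin M, dist x (cE u) ≤ r := by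
    intro x
    obtain ⟨y, hy, hdy⟩ := hdense x
    refine ⟨Y.equivFin ⟨y, hy⟩, ?_⟩
    have : cE (Y.equivFin ⟨y, hy⟩) = y := by
      simp [hcE]
    rwa [this]
  -- the Voronoi cell map
  set Amin : S → Finset (Fin M) :=
    fun x => Finset.univ.filter (fun u => ∀ v, dist x (cE u) ≤ dist x (cE v)) with hAmin
  have hAne : ∀ x, (Amin x).Nonempty := by
    intro x
    obtain ⟨u₀, -, hu₀⟩ := Finset.exists_min_image Finset.univ (fun u => dist x (cE u))
      ⟨Classical.arbitrary (Fin M), Finset.mem_univ _⟩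
    exact ⟨u₀, Finset.mem_filter.mpr ⟨Finset.mem_univ _, fun v => hu₀ v (Finset.mem_univ v)⟩⟩
  set F : S → Fin M := fun x => (Amin x).min' (hAne x) with hF
  have hFmem : ∀ x, ∀ v, dist x (cE (F x)) ≤ dist x (cE v) := by
    intro x
    have hmem : F x ∈ Finset.univ.filter (fun u => ∀ v, dist x (cE u) ≤ dist x (cE v)) :=
      Finset.min'_mem (Amin x) (hAne x)
    exact (Finset.mem_filter.mp hmem).2
  have hFnear : ∀ x, dist x (cE (F x)) ≤ r := by
    intro x
    obtain ⟨u, hu⟩ := hdenseE x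
    exact (hFmem x u).trans hu
  -- ball inside cell
  have hball : ∀ (u : Fin M) (x : S), dist x (cE u) ≤ r/4 → F x = u := by
    intro u x hx
    have hlt : ∀ w, w ≠ u → dist x (cE u) < dist x (cE w) := by
      intro w hw
      have h1 : r < dist (cE u) (cE w) := hsepE u w (Ne.symm hw)
      have h2 := dist_triangle (cE u) x (cE w)
      rw [dist_comm (cE u) x] at h2
      linarith
    have hAeq : Amin x = {u} := by
      apply Finset.eq_singleton_iff_unique_mem.mpr
      constructor
      · refine Finset.mem_filter.mpr ⟨Finset.mem_univ _, fun v => ?_⟩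
        by_cases hv : v = u
        · subst hv; exact le_refl _
        · exact (hlt v hv).le
      · intro w hw
        by_contra hwu
        have := (Finset.mem_filter.mp hw).2 u
        exact absurd this (not_le.mpr (hlt w hwu))
    rw [hF]
    simp only [hAeq]
    exact Finset.min'_singleton u
  -- measurability
  have hAmem_meas : ∀ u : Fin M, MeasurableSet {x : S | u ∈ Amin x} := by
    intro u
    have : {x : S | u ∈ Amin x} = ⋂ v : Fin M, {x : S | dist x (cE u) ≤ dist x (cE v)} := by
      ext x
      simp only [Set.mem_setOf_eq, Set.mem_iInter, hAmin, Finset.mem_filter, Finset.mem_univ,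
        true_and]
    rw [this]
    refine MeasurableSet.iInter fun v => ?_
    exact (isClosed_le (continuous_id.dist continuous_const)
      (continuous_id.dist continuous_const)).measurableSet
  have hFpre : ∀ u : Fin M, F ⁻¹' {u} =
      {x : S | u ∈ Amin x} ∩ ⋂ (w : Fin M) (_ : w < u), {x : S | w ∈ Amin x}ᶜ := by
    intro u
    ext x
    simp only [Set.mem_preimage, Set.mem_singleton_iff, Set.mem_inter_iff, Set.mem_iInter,
      Set.mem_compl_iff, Set.mem_setOf_eq]
    constructor
    · rintro rfl
      refine ⟨Finset.min'_mem _ _, fun w hw hmem => ?_⟩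
      exact absurd (Finset.min'_le _ _ hmem) (not_le.mpr hw)
    · rintro ⟨hu, hws⟩
      have h1 : F x ≤ u := Finset.min'_le _ _ hu
      have h2 : ¬ F x < u := fun hlt => hws (F x) hlt (Finset.min'_mem _ _)
      exact le_antisymm h1 (not_lt.mp h2)
  have hFmeas : Measurable F := by
    apply measurable_to_countable'
    intro u
    rw [hFpre u]
    exact (hAmem_meas u).inter
      (MeasurableSet.iInter fun w => MeasurableSet.iInter fun _ => (hAmem_meas w).compl)
  refine ⟨F, hFmeas, ?_, ?_⟩
  · intro x x' hxx
    have h1 := hFnear x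
    have h2 := hFnear x'
    rw [hxx] at h1
    calc dist x x' ≤ dist x (cE (F x')) + dist (cE (F x')) x' := dist_triangle _ _ _
      _ = dist x (cE (F x')) + dist x' (cE (F x')) := by rw [dist_comm (cE (F x')) x']
      _ ≤ 2*r := by linarith
  · intro u
    have hsub : Metric.closedBall (cE u) (r/4) ⊆ F ⁻¹' {u} := by
      intro x hx
      rw [Metric.mem_closedBall] at hx
      exact hball u x hx
    calc ENNReal.ofReal (κ * (r/4) ^ d) ≤ unifSphere d (Metric.closedBall (cE u) (r/4)) :=
          hκ (cE u) (r/4) (by linarith) (by linarith)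
      _ ≤ unifSphere d (F ⁻¹' {u}) := measure_mono hsub

lemma unifSphere_isProb (d : ℕ) : IsProbabilityMeasure (unifSphere d) := by
  constructor
  rw [unifSphere, Measure.smul_apply, smul_eq_mul]
  have hdim : (Module.finrank ℝ (EuclideanSpace ℝ (Fin (d+1)))) = d + 1 :=
    finrank_euclideanSpace_fin
  have hTuniv : (volume : Measure (EuclideanSpace ℝ (Fin (d+1)))).toSphere Set.univ
      = (d+1 : ℕ) * volume (ball (0:EuclideanSpace ℝ (Fin (d+1))) 1) := by
    rw [Measure.toSphere_apply_univ, hdim]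
  have hTuniv_ne0 : (volume : Measure (EuclideanSpace ℝ (Fin (d+1)))).toSphere Set.univ ≠ 0 := by
    rw [hTuniv]
    exact mul_ne_zero (by simp) (volume_ball_pos' d).ne'
  have hTuniv_ne_top : (volume : Measure (EuclideanSpace ℝ (Fin (d+1)))).toSphere Set.univ ≠ ⊤ := by
    rw [hTuniv]
    exact ENNReal.mul_ne_top (ENNReal.natCast_ne_top _) (volume_ball_lt_top' d).ne
  exact ENNReal.inv_mul_cancel hTuniv_ne0 hTuniv_ne_top

end CapPart

/-- for i.i.d. uniform points `θ₁,…,θ_n` on `S^d`, with probability at least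
`1-δ` the separation distance satisfies `min_{i≠j} ρ(θ_i,θ_j) ≲ (log(1/δ)/n²)^{1/d}`,
the constant depending only on `d`; i.e. some pair of points is at geodesic distance
at most `C_d (log(1/δ)/n²)^{1/d}` (order `n^{-2/d}`, not `n^{-1/d}`). -/
theorem separation_distance_random_points (d : ℕ) (hd : 1 ≤ d) :
    ∃ Cd : ℝ, 0 < Cd ∧
      ∀ (Ω : Type) (mΩ : MeasurableSpace Ω) (P : Measure Ω), IsProbabilityMeasure P →
        ∀ (n : ℕ), 2 ≤ n → ∀ (δ : ℝ), 0 < δ → δ < 1 →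
          ∀ (θ : Fin n → Ω → Metric.sphere (0 : EuclideanSpace ℝ (Fin (d + 1))) 1),
            (∀ j, Measurable (θ j)) →
            iIndepFun θ P →
            (∀ j, Measure.map (θ j) P = unifSphere d) →
            1 - δ ≤
              (P {ω | ∃ i j : Fin n, i ≠ j ∧
                  geoDist ((θ i ω : EuclideanSpace ℝ (Fin (d + 1))))
                      (θ j ω) ≤
                    Cd * (Real.log (1 / δ) / (n ^ 2 : ℕ)) ^ (1 / (d : ℝ))}).toReal := by
  classical
  obtain ⟨κ, hκpos, hκ⟩ := cap_lower d hd
  have hdR : (0:ℝ) < d := by exact_mod_cast hd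
  have hCd0 : (0:ℝ) < 4 * Real.pi * (4/κ) ^ (1/(d:ℝ)) := by
    have h1 : (0:ℝ) < 4/κ := by positivity
    have h2 : (0:ℝ) < (4/κ) ^ (1/(d:ℝ)) := Real.rpow_pos_of_pos h1 _
    positivity
  refine ⟨4 * Real.pi * (4/κ) ^ (1/(d:ℝ)), hCd0, ?_⟩
  intro Ω mΩ P hP n hn δ hδ0 hδ1 θ hθmeas hindep hunif
  obtain ⟨L, hL_def⟩ : ∃ L : ℝ, Real.log (1/δ) = L := ⟨_, rfl⟩
  rw [hL_def]
  have hL : 0 < L := hL_def ▸ Real.log_pos (one_lt_one_div hδ0 hδ1)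
  have hnR : (2:ℝ) ≤ n := by exact_mod_cast hn
  have hnpos : (0:ℝ) < n := by linarith
  obtain ⟨x0, hx0⟩ : ∃ x0 : ℝ, 4*L/(κ * (n:ℝ)^2) = x0 := ⟨_, rfl⟩
  have hx0pos : 0 < x0 := by
    rw [← hx0]
    exact div_pos (by linarith) (mul_pos hκpos (by positivity))
  obtain ⟨r, hr_def⟩ : ∃ r : ℝ, 4 * x0 ^ (1/(d:ℝ)) = r := ⟨_, rfl⟩
  have hrpow : 0 < x0 ^ (1/(d:ℝ)) := Real.rpow_pos_of_pos hx0pos _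
  have hr0 : 0 < r := by rw [← hr_def]; positivity
  have hcast : ((n^2 : ℕ) : ℝ) = (n:ℝ)^2 := by push_cast; ring
  have hbase : x0 = (4/κ) * (L / (n:ℝ)^2) := by
    rw [← hx0]; field_simp
  have hkey : 4 * Real.pi * (4/κ) ^ (1/(d:ℝ)) * (L / ((n^2:ℕ):ℝ)) ^ (1/(d:ℝ))
      = Real.pi * r := by
    rw [hcast, ← hr_def, hbase,
      Real.mul_rpow (le_of_lt (by positivity : (0:ℝ) < 4/κ))
        (div_nonneg hL.le (sq_nonneg _))]
    ring
  by_cases hr2 : r ≤ 2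
  · -- main case : use the partition and the birthday bound
    obtain ⟨M, hMpos, F, hFmeas, hdiam, hcells⟩ := exists_partition d κ hκ r hr0 hr2
    haveI : Nonempty (Fin M) := Fin.pos_iff_nonempty.mp hMpos
    set X : Fin n → Ω → Fin M := fun j ω => F (θ j ω) with hX
    have hXmeas : ∀ j, Measurable (X j) := fun j => hFmeas.comp (hθmeas j)
    have hXindep : iIndepFun X P :=
      hindep.comp (fun _ => F) (fun _ => hFmeas)
    set q : Fin M → ℝ≥0∞ := fun u => unifSphere d (F ⁻¹' {u}) with hq
    have hlaw : ∀ j u, P (X j ⁻¹' {u}) = q u := by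
      intro j u
      have h1 : X j ⁻¹' {u} = θ j ⁻¹' (F ⁻¹' {u}) := rfl
      rw [h1, ← Measure.map_apply (hθmeas j) (hFmeas (measurableSet_singleton u)), hunif j]
    set injF : Finset (Fin n → Fin M) := Finset.univ.filter Function.Injective with hinjF
    set A : (Fin n → Fin M) → Set Ω := fun x => ⋂ j, X j ⁻¹' {x j} with hA
    have hAmeas : ∀ x, MeasurableSet (A x) := fun x =>
      MeasurableSet.iInter fun j => hXmeas j (measurableSet_singleton _)
    have hAdisj : (↑injF : Set (Fin n → Fin M)).PairwiseDisjoint A := by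
      intro x hx x' hx' hne
      refine Set.disjoint_left.mpr fun ω hω hω' => hne ?_
      simp only [hA, Set.mem_iInter, Set.mem_preimage, Set.mem_singleton_iff] at hω hω'
      funext j; rw [← hω j, ← hω' j]
    have hIeq : {ω | Function.Injective fun j => X j ω} = ⋃ x ∈ injF, A x := by
      ext ω
      simp only [Set.mem_setOf_eq, Set.mem_iUnion, hA, Set.mem_iInter, Set.mem_preimage,
        Set.mem_singleton_iff, hinjF, Finset.mem_filter, Finset.mem_univ, true_and]
      constructor
      · intro hinj
        exact ⟨fun j => X j ω, hinj, fun j => rfl⟩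
      · rintro ⟨x, hxinj, hx⟩
        have hfun : (fun j => X j ω) = x := funext hx
        rw [hfun]; exact hxinj
    have hImeas : MeasurableSet {ω | Function.Injective fun j => X j ω} := by
      rw [hIeq]; exact injF.measurableSet_biUnion (fun x _ => hAmeas x)
    have hPA : ∀ x : Fin n → Fin M, P (A x) = ∏ j, q (x j) := by
      intro x
      have h1 : A x = ⋂ j ∈ (Finset.univ : Finset (Fin n)), X j ⁻¹' {x j} := by
        rw [hA]; ext ω; simp
      rw [h1, hXindep.measure_inter_preimage_eq_mul Finset.univ
        (fun j _ => measurableSet_singleton (x j))]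
      exact Finset.prod_congr rfl fun j _ => hlaw j (x j)
    have hPI : P {ω | Function.Injective fun j => X j ω} = ∑ x ∈ injF, ∏ j, q (x j) := by
      rw [hIeq, measure_biUnion_finset hAdisj (fun x _ => hAmeas x)]
      exact Finset.sum_congr rfl fun x _ => hPA x
    haveI := unifSphere_isProb d
    have hqne : ∀ u, q u ≠ ⊤ := fun u => (measure_lt_top _ _).ne
    set qr : Fin M → ℝ := fun u => (q u).toReal with hqr
    have hqr0 : ∀ u, 0 ≤ qr u := fun u => ENNReal.toReal_nonneg
    have hsumq : ∑ u, q u = 1 := by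
      have hU : (⋃ u : Fin M, F ⁻¹' {u}) = Set.univ :=
        Set.eq_univ_of_forall fun z => Set.mem_iUnion.mpr ⟨F z, rfl⟩
      have hdis : Pairwise (Function.onFun Disjoint fun u : Fin M => F ⁻¹' {u}) := by
        intro u v huv
        refine Set.disjoint_left.mpr fun z hz hz' => huv ?_
        simp only [Set.mem_preimage, Set.mem_singleton_iff] at hz hz'
        rw [← hz, ← hz']
      have h1 := measure_iUnion (μ := unifSphere d) hdis
        (fun u => hFmeas (measurableSet_singleton u))
      rw [hU, measure_univ, tsum_fintype] at h1
      exact h1.symm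
    have hsumqr : ∑ u, qr u = 1 := by
      have h1 : ∑ u, qr u = (∑ u, q u).toReal :=
        (ENNReal.toReal_sum (fun u _ => hqne u)).symm
      rw [h1, hsumq, ENNReal.toReal_one]
    set p₀ : ℝ := κ * (r/4)^d with hp₀
    have hp₀pos : 0 < p₀ := mul_pos hκpos (pow_pos (by linarith) d)
    have hqlb : ∀ u, p₀ ≤ qr u := fun u =>
      (ENNReal.ofReal_le_iff_le_toReal (hqne u)).mp (hcells u)
    have hrho : r/4 = x0 ^ (1/(d:ℝ)) := by rw [← hr_def]; ring
    have hdne : (d:ℝ) ≠ 0 := ne_of_gt hdR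
    have hrho_d : (r/4)^d = x0 := by
      rw [hrho, ← Real.rpow_natCast (x0 ^ (1/(d:ℝ))) d, ← Real.rpow_mul hx0pos.le,
        one_div, inv_mul_cancel₀ hdne, Real.rpow_one]
    have hp₀val : p₀ = 4*L/(n:ℝ)^2 := by
      rw [hp₀, hrho_d, ← hx0]
      field_simp
    have hPIreal : (P {ω | Function.Injective fun j => X j ω}).toReal = injSum M n qr := by
      rw [hPI, injSum, ← Finset.sum_filter,
        ENNReal.toReal_sum (fun x _ => (ENNReal.prod_lt_top (fun j _ => (hqne (x j)).lt_top)).ne)]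
      exact Finset.sum_congr rfl fun x _ => ENNReal.toReal_prod _ _
    have hbound : injSum M n qr ≤ δ := by
      have h1 := injSum_le M n qr hqr0 p₀ hp₀pos.le hqlb hsumqr
      have hkey2 : 4*L/(n:ℝ)^2 * ((n:ℝ) * ((n:ℝ)-1)/2) = 2*L*((n:ℝ)-1)/(n:ℝ) := by
        field_simp; ring
      have h2 : L ≤ p₀ * ((n:ℝ) * ((n:ℝ)-1)/2) := by
        rw [hp₀val, hkey2, le_div_iff₀ hnpos]
        nlinarith
      calc injSum M n qr ≤ Real.exp (-p₀ * ((n:ℝ)*((n:ℝ)-1)/2)) := h1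
        _ ≤ Real.exp (-L) := Real.exp_le_exp.mpr (by nlinarith)
        _ = δ := by
            rw [← hL_def, one_div, Real.log_inv, neg_neg, Real.exp_log hδ0]
    have hsub : {ω | Function.Injective fun j => X j ω}ᶜ ⊆
        {ω | ∃ i j : Fin n, i ≠ j ∧
          geoDist ((θ i ω : EuclideanSpace ℝ (Fin (d + 1)))) (θ j ω) ≤
            4 * Real.pi * (4/κ) ^ (1/(d:ℝ)) * (L / ((n^2:ℕ):ℝ)) ^ (1/(d:ℝ))} := by
      intro ω hω
      rw [Set.mem_compl_iff, Set.mem_setOf_eq] at hω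
      obtain ⟨i, j, hij, hne⟩ := Function.not_injective_iff.mp hω
      refine ⟨i, j, hne, ?_⟩
      have hdist : dist (θ i ω) (θ j ω) ≤ 2*r := hdiam _ _ hij
      have h1 : geoDist ((θ i ω : EuclideanSpace ℝ (Fin (d + 1)))) (θ j ω) ≤
          Real.pi/2 * ‖((θ i ω : EuclideanSpace ℝ (Fin (d + 1)))) - (θ j ω : EuclideanSpace ℝ (Fin (d + 1)))‖ :=
        geoDist_le _ _ (mem_sphere_zero_iff_norm.mp (θ i ω).2)
          (mem_sphere_zero_iff_norm.mp (θ j ω).2)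
      have h2 : ‖((θ i ω : EuclideanSpace ℝ (Fin (d + 1)))) - (θ j ω : EuclideanSpace ℝ (Fin (d + 1)))‖
          = dist (θ i ω) (θ j ω) := by
        rw [Subtype.dist_eq, dist_eq_norm]
      calc geoDist ((θ i ω : EuclideanSpace ℝ (Fin (d + 1)))) (θ j ω)
          ≤ Real.pi/2 * dist (θ i ω) (θ j ω) := by rw [← h2]; exact h1
        _ ≤ Real.pi/2 * (2*r) :=
            mul_le_mul_of_nonneg_left hdist (by positivity)
        _ = Real.pi * r := by ring
        _ = 4 * Real.pi * (4/κ) ^ (1/(d:ℝ)) * (L / ((n^2:ℕ):ℝ)) ^ (1/(d:ℝ)) := hkey.symm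
    have hPc : (1:ℝ) - δ ≤ (P ({ω | Function.Injective fun j => X j ω}ᶜ)).toReal := by
      rw [prob_compl_eq_one_sub hImeas,
        ENNReal.toReal_sub_of_le prob_le_one ENNReal.one_ne_top, ENNReal.toReal_one]
      have hle : (P {ω | Function.Injective fun j => X j ω}).toReal ≤ δ := by
        rw [hPIreal]; exact hbound
      linarith
    exact hPc.trans (ENNReal.toReal_mono (measure_ne_top P _) (measure_mono hsub))
  · -- trivial case : the bound exceeds π
    push_neg at hr2
    have hπr : Real.pi ≤ Real.pi * r := by nlinarith [Real.pi_pos]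
    have huniv : {ω | ∃ i j : Fin n, i ≠ j ∧
        geoDist ((θ i ω : EuclideanSpace ℝ (Fin (d + 1)))) (θ j ω) ≤
          4 * Real.pi * (4/κ) ^ (1/(d:ℝ)) * (L / ((n^2:ℕ):ℝ)) ^ (1/(d:ℝ))} = Set.univ := by
      refine Set.eq_univ_of_forall fun ω => ?_
      refine ⟨⟨0, by omega⟩, ⟨1, by omega⟩, by simp [Fin.ext_iff], ?_⟩
      calc geoDist _ _ ≤ Real.pi := Real.arccos_le_pi _
        _ ≤ Real.pi * r := hπr
        _ = 4 * Real.pi * (4/κ) ^ (1/(d:ℝ)) * (L / ((n^2:ℕ):ℝ)) ^ (1/(d:ℝ)) := hkey.symm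
    rw [huniv, measure_univ, ENNReal.toReal_one]
    linarith
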